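/- Let f ∈ ℂ⟦u,v⟧ be a nonzero Newton-non-degenerate formal power series with f(0)=0. Then the lowest-degree homogeneous form of f can be written as c·u^a·v^b·g(u,v), where c ∈ ℂ∖{0}, a,b ≥ 0, and g is a squarefree homogeneous polynomial divisible by neither u nor v. In particular, at most two distinct linear factors (necessarily among u and v) occur in the lowest-degree homogeneous form of f with multiplicity greater than 1, i.e. the tangent cone of the germ {f=0} has at most two tangent lines of multiplicity greater than 1. -/

import Mathlib

open MvPolynomial Filter

noncomputable section

/-- Polynomials in the two variables `u = X 0`, `v = X 1` over ℂ. -/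
abbrev Poly2 : Type := MvPolynomial (Fin 2) ℂ

abbrev PS2 : Type := MvPowerSeries (Fin 2) ℂ

/-- The order of a formal power series: the least total degree of a monomial
with nonzero coefficient. -/
def psOrder (h : PS2) : ℕ :=
  sInf {n | ∃ m : Fin 2 →₀ ℕ, m 0 + m 1 = n ∧ MvPowerSeries.coeff m h ≠ 0}

/-- The lowest-degree homogeneous form of a formal power series, as a polynomial. -/
def psLowestForm (h : PS2) : Poly2 :=
  ∑ i ∈ Finset.range (psOrder h + 1),
    monomial (Finsupp.single 0 i + Finsupp.single 1 (psOrder h - i))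
      (MvPowerSeries.coeff (Finsupp.single 0 i + Finsupp.single 1 (psOrder h - i)) h)

/-- The `w`-weighted order of a formal power series, for weights `w : Fin 2 → ℕ`. -/
def wOrder (w : Fin 2 → ℕ) (f : PS2) : ℕ :=
  sInf {n | ∃ m : Fin 2 →₀ ℕ, m 0 * w 0 + m 1 * w 1 = n ∧ MvPowerSeries.coeff m f ≠ 0}

/-- The `w`-initial form of a formal power series: the sum of all its terms of minimal
`w`-weighted degree, as a polynomial. -/
def wInitialForm (w : Fin 2 → ℕ) (f : PS2) : Poly2 :=
  ∑ p ∈ (Finset.range (wOrder w f + 1) ×ˢ Finset.range (wOrder w f + 1)).filter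
      (fun p : ℕ × ℕ => p.1 * w 0 + p.2 * w 1 = wOrder w f),
    monomial (Finsupp.single 0 p.1 + Finsupp.single 1 p.2)
      (MvPowerSeries.coeff (Finsupp.single 0 p.1 + Finsupp.single 1 p.2) f)

/-- A power series `f` is Newton-non-degenerate if for every pair of positive integer
weights `w` the `w`-initial form of `f` has no critical points in the torus `(ℂ∖{0})²`. -/
def NewtonNonDegenerate (f : PS2) : Prop :=
  ∀ w : Fin 2 → ℕ, (∀ i, 0 < w i) →
    ¬ ∃ a : Fin 2 → ℂ, a 0 ≠ 0 ∧ a 1 ≠ 0 ∧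
      eval a (pderiv 0 (wInitialForm w f)) = 0 ∧
      eval a (pderiv 1 (wInitialForm w f)) = 0

namespace NND
open Polynomial


lemma fin2_apply_0 (a b : ℕ) : (Finsupp.single 0 a + Finsupp.single 1 b : Fin 2 →₀ ℕ) 0 = a := by
  simp [Finsupp.single_apply]

lemma fin2_apply_1 (a b : ℕ) : (Finsupp.single 0 a + Finsupp.single 1 b : Fin 2 →₀ ℕ) 1 = b := by
  simp [Finsupp.single_apply]

lemma fin2_eq (m : Fin 2 →₀ ℕ) : m = Finsupp.single 0 (m 0) + Finsupp.single 1 (m 1) := by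
  ext i
  match i with
  | 0 => simp [Finsupp.single_apply]
  | 1 => simp [Finsupp.single_apply]

lemma degree_fin2 (m : Fin 2 →₀ ℕ) : m.degree = m 0 + m 1 := by
  rw [Finsupp.degree, ← Fin.sum_univ_two (f := fun i => m i)]
  exact Finset.sum_subset (Finset.subset_univ _) (by
    intro i _ hi
    simpa using (Finsupp.notMem_support_iff.mp hi))

lemma pair_ext {a b a' b' : ℕ} (h : (Finsupp.single 0 a + Finsupp.single 1 b : Fin 2 →₀ ℕ)
    = Finsupp.single 0 a' + Finsupp.single 1 b') : a = a' ∧ b = b' := by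
  constructor
  · have := DFunLike.congr_fun h 0
    simpa [fin2_apply_0, fin2_apply_1] using this
  · have := DFunLike.congr_fun h 1
    simpa [fin2_apply_0, fin2_apply_1] using this

/-- homogenization of a univariate polynomial to degree `e`. -/
def hom (e : ℕ) (q : Polynomial ℂ) : Poly2 :=
  ∑ j ∈ Finset.range (e+1),
    monomial (Finsupp.single 0 (e - j) + Finsupp.single 1 j) (q.coeff j)

/-- evaluation map `P(u,v) ↦ P(1,t)`. -/
def phi : Poly2 →ₐ[ℂ] Polynomial ℂ := aeval ![1, Polynomial.X]

lemma phi_monomial (m : Fin 2 →₀ ℕ) (c : ℂ) :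
    phi (monomial m c) = Polynomial.C c * Polynomial.X ^ (m 1) := by
  rw [phi, MvPolynomial.aeval_monomial]
  rw [Finsupp.prod_fintype _ _ (fun i => pow_zero _), Fin.prod_univ_two]
  simp [algebraMap_eq]

lemma hom_isHomogeneous (e : ℕ) (q : Polynomial ℂ) : (hom e q).IsHomogeneous e := by
  apply IsHomogeneous.sum
  intro j hj
  apply isHomogeneous_monomial
  rw [degree_fin2, fin2_apply_0, fin2_apply_1]
  have := Finset.mem_range.mp hj
  omega

lemma phi_hom (e : ℕ) (q : Polynomial ℂ) (h : q.natDegree ≤ e) : phi (hom e q) = q := by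
  rw [hom, map_sum]
  conv_rhs => rw [q.as_sum_range' (e+1) (Nat.lt_succ_of_le h)]
  refine Finset.sum_congr rfl fun j _ => ?_
  rw [phi_monomial, fin2_apply_1, Polynomial.C_mul_X_pow_eq_monomial]


lemma coeff_phi {P : Poly2} {d : ℕ} (hP : P.IsHomogeneous d) (j : ℕ) :
    (phi P).coeff j =
      if j ≤ d then MvPolynomial.coeff (Finsupp.single 0 (d - j) + Finsupp.single 1 j) P
      else 0 := by
  conv_lhs => rw [P.as_sum, map_sum]
  rw [Polynomial.finset_sum_coeff]
  have hterm : ∀ m : Fin 2 →₀ ℕ,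
      (phi (monomial m (MvPolynomial.coeff m P))).coeff j =
        if m 1 = j then MvPolynomial.coeff m P else 0 := by
    intro m
    rw [phi_monomial, Polynomial.coeff_C_mul, Polynomial.coeff_X_pow]
    split_ifs with h h' h' <;> simp_all
  split_ifs with hjd
  · set m₀ : Fin 2 →₀ ℕ := Finsupp.single 0 (d - j) + Finsupp.single 1 j with hm₀
    rw [Finset.sum_eq_single m₀]
    · rw [hterm, if_pos (fin2_apply_1 _ _)]
    · intro m hm hne
      rw [hterm]
      have hdm : m 0 + m 1 = d := by
        have := hP (MvPolynomial.mem_support_iff.mp hm)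
        change (Finsupp.weight (fun _ => 1)) m = d at this
        rw [← Finsupp.degree_eq_weight_one] at this
        rwa [degree_fin2] at this
      split_ifs with h1
      · exfalso
        apply hne
        rw [fin2_eq m, h1, hm₀]
        congr 1
        congr 1
        omega
      · rfl
    · intro hm₀'
      rw [hterm, if_pos (fin2_apply_1 _ _)]
      exact (MvPolynomial.notMem_support_iff.mp hm₀').symm ▸ rfl
  · apply Finset.sum_eq_zero
    intro m hm
    rw [hterm]
    have hdm : m 0 + m 1 = d := by
      have := hP (MvPolynomial.mem_support_iff.mp hm)
      change (Finsupp.weight (fun _ => 1)) m = d at this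
      rw [← Finsupp.degree_eq_weight_one] at this
      rwa [degree_fin2] at this
    have : m 1 ≠ j := by omega
    rw [if_neg this]

lemma natDegree_phi_le {P : Poly2} {d : ℕ} (hP : P.IsHomogeneous d) :
    (phi P).natDegree ≤ d := by
  apply Polynomial.natDegree_le_iff_coeff_eq_zero.mpr
  intro j hj
  rw [coeff_phi hP, if_neg (by omega)]

lemma coeff_phi' {P : Poly2} {d : ℕ} (hP : P.IsHomogeneous d) {m : Fin 2 →₀ ℕ}
    (hm : m 0 + m 1 = d) : (phi P).coeff (m 1) = MvPolynomial.coeff m P := by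
  rw [coeff_phi hP, if_pos (by omega)]
  congr 1
  conv_rhs => rw [fin2_eq m]
  congr 2
  omega

lemma phi_inj {P Q : Poly2} {d : ℕ} (hP : P.IsHomogeneous d) (hQ : Q.IsHomogeneous d)
    (h : phi P = phi Q) : P = Q := by
  apply MvPolynomial.ext
  intro m
  by_cases hm : m 0 + m 1 = d
  · rw [← coeff_phi' hP hm, ← coeff_phi' hQ hm, h]
  · rw [hP.coeff_eq_zero (by rw [degree_fin2]; exact hm),
      hQ.coeff_eq_zero (by rw [degree_fin2]; exact hm)]

lemma hom_phi {P : Poly2} {d : ℕ} (hP : P.IsHomogeneous d) : hom d (phi P) = P :=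
  phi_inj (hom_isHomogeneous d _) hP (phi_hom d _ (natDegree_phi_le hP))

lemma hom_mul {q₁ q₂ : Polynomial ℂ} {e₁ e₂ : ℕ} (h₁ : q₁.natDegree ≤ e₁)
    (h₂ : q₂.natDegree ≤ e₂) :
    hom (e₁ + e₂) (q₁ * q₂) = hom e₁ q₁ * hom e₂ q₂ := by
  apply phi_inj (hom_isHomogeneous _ _) ((hom_isHomogeneous e₁ q₁).mul (hom_isHomogeneous e₂ q₂))
  rw [map_mul, phi_hom _ _ h₁, phi_hom _ _ h₂, phi_hom]
  exact le_trans (Polynomial.natDegree_mul_le) (add_le_add h₁ h₂)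

lemma eval_phi (P : Poly2) (l : ℂ) :
    MvPolynomial.eval ![1, l] P = (phi P).eval l := by
  have h : (Polynomial.aeval l : Polynomial ℂ →ₐ[ℂ] ℂ).comp phi
      = MvPolynomial.aeval ![1, l] := by
    apply MvPolynomial.algHom_ext
    intro i
    match i with
    | 0 => simp [phi]
    | 1 => simp [phi]
  have h2 := DFunLike.congr_fun h P
  simp only [AlgHom.comp_apply] at h2
  have h3 : MvPolynomial.eval ![1, l] P = MvPolynomial.aeval ![1, l] P := by
    rw [← MvPolynomial.coe_aeval_eq_eval]; rfl
  rw [h3, ← h2, Polynomial.coe_aeval_eq_eval]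


lemma eval_hom_gen (x y : ℂ) (e : ℕ) (q : Polynomial ℂ) :
    MvPolynomial.eval ![x, y] (hom e q) =
      ∑ j ∈ Finset.range (e+1), q.coeff j * (x ^ (e - j) * y ^ j) := by
  rw [hom, map_sum]
  refine Finset.sum_congr rfl fun j _ => ?_
  rw [MvPolynomial.eval_monomial, Finsupp.prod_fintype _ _ (fun i => pow_zero _),
    Fin.prod_univ_two]
  simp [fin2_apply_0, fin2_apply_1]

lemma eval01_hom (e : ℕ) (q : Polynomial ℂ) :
    MvPolynomial.eval ![(0:ℂ), 1] (hom e q) = q.coeff e := by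
  rw [eval_hom_gen, Finset.sum_eq_single e]
  · simp
  · intro j hj hne
    have : e - j ≠ 0 := by have := Finset.mem_range.mp hj; omega
    simp [Matrix.cons_val_zero, zero_pow this]
  · intro h; exact absurd (Finset.self_mem_range_succ e) h

lemma eval10_hom (e : ℕ) (q : Polynomial ℂ) :
    MvPolynomial.eval ![(1:ℂ), 0] (hom e q) = q.coeff 0 := by
  rw [eval_hom_gen, Finset.sum_eq_single 0]
  · simp
  · intro j hj hne
    simp [zero_pow hne]
  · intro h; exact absurd (Finset.mem_range.mpr (Nat.succ_pos e)) h

/-- If `(X - λ)²` divides `phi P` for homogeneous `P`, then `(1, λ)` is a critical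
point of `P`. -/
lemma crit {P : Poly2} {d : ℕ} (hP : P.IsHomogeneous d) (l : ℂ)
    (h2 : (Polynomial.X - Polynomial.C l) ^ 2 ∣ phi P) (i : Fin 2) :
    MvPolynomial.eval ![1, l] (pderiv i P) = 0 := by
  obtain ⟨r, hr⟩ := h2
  by_cases hr0 : r = 0
  · have hphi : phi P = 0 := by rw [hr, hr0, mul_zero]
    have : P = 0 := phi_inj hP (isHomogeneous_zero _ _ _) (by rw [hphi, map_zero])
    rw [this, map_zero, map_zero]
  · -- degree bookkeeping
    have hXl : (Polynomial.X - Polynomial.C l).natDegree = 1 := Polynomial.natDegree_X_sub_C l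
    have hd2 : 2 + r.natDegree ≤ d := by
      have := natDegree_phi_le hP
      rw [hr] at this
      rw [Polynomial.natDegree_mul (pow_ne_zero _ (Polynomial.X_sub_C_ne_zero l)) hr0,
        Polynomial.natDegree_pow, hXl] at this
      omega
    set L : Poly2 := hom 1 (Polynomial.X - Polynomial.C l) with hL
    set R : Poly2 := hom (d - 2) r with hR
    have hrd : r.natDegree ≤ d - 2 := by omega
    have hPLR : P = L * (L * R) := by
      have h1 : (1:ℕ) + (1 + (d - 2)) = d := by omega
      have := hom_mul (q₁ := Polynomial.X - Polynomial.C l)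
        (q₂ := (Polynomial.X - Polynomial.C l) * r) (e₁ := 1) (e₂ := 1 + (d-2))
        (le_of_eq hXl)
        (le_trans Polynomial.natDegree_mul_le (by rw [hXl]; omega))
      have h2' := hom_mul (q₁ := Polynomial.X - Polynomial.C l) (q₂ := r)
        (e₁ := 1) (e₂ := d - 2) (le_of_eq hXl) hrd
      calc P = hom d (phi P) := (hom_phi hP).symm
        _ = hom (1 + (1 + (d-2))) ((Polynomial.X - Polynomial.C l) *
              ((Polynomial.X - Polynomial.C l) * r)) := by rw [h1, hr, ← mul_assoc, sq]
        _ = L * (L * R) := by rw [this, h2']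
    have hevL : MvPolynomial.eval ![1, l] L = 0 := by
      rw [hL, eval_phi, phi_hom 1 _ (le_of_eq hXl)]
      simp
    rw [hPLR, pderiv_mul]
    simp only [map_add, map_mul, hevL, zero_mul, mul_zero, add_zero, zero_add]


lemma homComp_mul (s t : Poly2) (a b : ℕ)
    (h : ∀ i j, homogeneousComponent i s ≠ 0 → homogeneousComponent j t ≠ 0 →
      i + j = a + b → i = a ∧ j = b) :
    homogeneousComponent (a + b) (s * t) =
      homogeneousComponent a s * homogeneousComponent b t := by
  have hterm : ∀ i j : ℕ,
      homogeneousComponent (a+b) (homogeneousComponent i s * homogeneousComponent j t)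
        = if i + j = a + b then homogeneousComponent i s * homogeneousComponent j t
          else 0 := by
    intro i j
    have hmem : homogeneousComponent i s * homogeneousComponent j t
        ∈ homogeneousSubmodule (Fin 2) ℂ (i+j) :=
      mem_homogeneousSubmodule _ _ |>.mpr
        ((homogeneousComponent_isHomogeneous i s).mul (homogeneousComponent_isHomogeneous j t))
    rw [homogeneousComponent_of_mem hmem]
    by_cases hc : i + j = a + b
    · rw [if_pos hc, if_pos hc.symm]
    · rw [if_neg hc, if_neg (Ne.symm hc)]
  conv_lhs => rw [← sum_homogeneousComponent s, ← sum_homogeneousComponent t,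
    Finset.sum_mul_sum, map_sum]
  have hinner : ∀ i ∈ Finset.range (s.totalDegree + 1), i ≠ a →
      homogeneousComponent (a+b)
        (∑ j ∈ Finset.range (t.totalDegree + 1),
          homogeneousComponent i s * homogeneousComponent j t) = 0 := by
    intro i _ hia
    rw [map_sum]
    apply Finset.sum_eq_zero
    intro j _
    rw [hterm]
    split_ifs with hij
    · by_contra hne
      have h1 : homogeneousComponent i s ≠ 0 := fun h0 => hne (by rw [h0, zero_mul])
      have h2 : homogeneousComponent j t ≠ 0 := fun h0 => hne (by rw [h0, mul_zero])
      exact hia (h i j h1 h2 hij).1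
    · rfl
  rw [Finset.sum_eq_single a hinner]
  · rw [map_sum, Finset.sum_eq_single b]
    · rw [hterm, if_pos rfl]
    · intro j _ hjb
      rw [hterm, if_neg (by omega)]
    · intro hb
      have : homogeneousComponent b t = 0 := by
        apply homogeneousComponent_eq_zero
        have : ¬ b < t.totalDegree + 1 := fun hlt => hb (Finset.mem_range.mpr hlt)
        omega
      rw [hterm, if_pos rfl, this, mul_zero]
  · intro ha
    have h0 : homogeneousComponent a s = 0 := by
      apply homogeneousComponent_eq_zero
      have : ¬ a < s.totalDegree + 1 := fun hlt => ha (Finset.mem_range.mpr hlt)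
      omega
    rw [map_sum]
    apply Finset.sum_eq_zero
    intro j _
    rw [hterm, h0, zero_mul]
    split_ifs <;> rfl

lemma comp_set_nonempty {s : Poly2} (hs : s ≠ 0) :
    {i | homogeneousComponent i s ≠ 0}.Nonempty := by
  by_contra h
  rw [Set.not_nonempty_iff_eq_empty] at h
  apply hs
  rw [← sum_homogeneousComponent s]
  apply Finset.sum_eq_zero
  intro i _
  by_contra hi
  have : i ∈ {i | homogeneousComponent i s ≠ 0} := hi
  rw [h] at this
  exact this

lemma comp_set_bddAbove (s : Poly2) :
    BddAbove {i | homogeneousComponent i s ≠ 0} := by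
  refine ⟨s.totalDegree, fun i hi => ?_⟩
  by_contra hlt
  exact hi (homogeneousComponent_eq_zero _ s (by omega))

lemma isHomogeneous_of_dvd {g s : Poly2} {n : ℕ} (hg : g.IsHomogeneous n) (hg0 : g ≠ 0)
    (hdvd : s ∣ g) : ∃ k, s.IsHomogeneous k := by
  obtain ⟨t, rfl⟩ := hdvd
  have hs0 : s ≠ 0 := left_ne_zero_of_mul hg0
  have ht0 : t ≠ 0 := right_ne_zero_of_mul hg0
  set Ss := {i | homogeneousComponent i s ≠ 0} with hSs
  set St := {i | homogeneousComponent i t ≠ 0} with hSt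
  have hSsne := comp_set_nonempty hs0
  have hStne := comp_set_nonempty ht0
  set bs := sInf Ss
  set bt := sInf St
  set Ts := sSup Ss
  set Tt := sSup St
  have hbs : homogeneousComponent bs s ≠ 0 := Nat.sInf_mem hSsne
  have hbt : homogeneousComponent bt t ≠ 0 := Nat.sInf_mem hStne
  have hTs : homogeneousComponent Ts s ≠ 0 := Nat.sSup_mem hSsne (comp_set_bddAbove s)
  have hTt : homogeneousComponent Tt t ≠ 0 := Nat.sSup_mem hStne (comp_set_bddAbove t)
  have hlbs : ∀ i, homogeneousComponent i s ≠ 0 → bs ≤ i ∧ i ≤ Ts :=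
    fun i hi => ⟨Nat.sInf_le hi, le_csSup (comp_set_bddAbove s) hi⟩
  have hlbt : ∀ j, homogeneousComponent j t ≠ 0 → bt ≤ j ∧ j ≤ Tt :=
    fun j hj => ⟨Nat.sInf_le hj, le_csSup (comp_set_bddAbove t) hj⟩
  have hcompg : ∀ k, homogeneousComponent k (s * t) = if k = n then s * t else 0 :=
    fun k => homogeneousComponent_of_mem (mem_homogeneousSubmodule _ _ |>.mpr hg)
  have hbotmul : homogeneousComponent (bs + bt) (s * t)
      = homogeneousComponent bs s * homogeneousComponent bt t := by
    apply homComp_mul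
    intro i j hi hj hij
    have h1 := hlbs i hi
    have h2 := hlbt j hj
    omega
  have htopmul : homogeneousComponent (Ts + Tt) (s * t)
      = homogeneousComponent Ts s * homogeneousComponent Tt t := by
    apply homComp_mul
    intro i j hi hj hij
    have h1 := hlbs i hi
    have h2 := hlbt j hj
    omega
  have hbotne : homogeneousComponent (bs + bt) (s * t) ≠ 0 := by
    rw [hbotmul]; exact mul_ne_zero hbs hbt
  have htopne : homogeneousComponent (Ts + Tt) (s * t) ≠ 0 := by
    rw [htopmul]; exact mul_ne_zero hTs hTt
  have hbn : bs + bt = n := by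
    by_contra hne
    rw [hcompg _, if_neg hne] at hbotne
    exact hbotne rfl
  have hTn : Ts + Tt = n := by
    by_contra hne
    rw [hcompg _, if_neg hne] at htopne
    exact htopne rfl
  have hbsTs : bs = Ts := by
    have h1 := hlbs _ hbs
    have h2 := hlbt _ hbt
    omega
  refine ⟨bs, ?_⟩
  have hseq : s = homogeneousComponent bs s := by
    conv_lhs => rw [← sum_homogeneousComponent s]
    rw [Finset.sum_eq_single bs]
    · intro i _ hine
      by_contra hi
      have := hlbs i hi
      omega
    · intro hbs'
      have : ¬ bs < s.totalDegree + 1 := fun hlt => hbs' (Finset.mem_range.mpr hlt)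
      have := (hlbs _ hbs).2
      have hTsle : Ts ≤ s.totalDegree := by
        by_contra hgt
        exact hTs (homogeneousComponent_eq_zero _ s (by omega))
      omega
  rw [hseq]
  exact homogeneousComponent_isHomogeneous bs s

lemma hom_C (k : ℕ) (c : ℂ) :
    hom k (Polynomial.C c) = MvPolynomial.monomial (Finsupp.single 0 k) c := by
  rw [hom, Finset.sum_eq_single 0]
  · simp [Polynomial.coeff_C]
  · intro j _ hj
    rw [Polynomial.coeff_C, if_neg hj, map_zero]
  · intro h; exact absurd (Finset.mem_range.mpr (Nat.succ_pos k)) h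

lemma hom_one (k : ℕ) : hom k 1 = MvPolynomial.X 0 ^ k := by
  rw [← Polynomial.C_1, hom_C, MvPolynomial.X_pow_eq_monomial]

lemma hom_X_pow (k : ℕ) : hom k (Polynomial.X ^ k) = MvPolynomial.X 1 ^ k := by
  rw [hom, Finset.sum_eq_single k]
  · rw [Polynomial.coeff_X_pow, if_pos rfl]
    simp [MvPolynomial.X_pow_eq_monomial]
  · intro j _ hj
    rw [Polynomial.coeff_X_pow, if_neg hj, map_zero]
  · intro h; exact absurd (Finset.self_mem_range_succ k) h

end NND


namespace NND

lemma psOrder_spec (f : PS2) (hf : f ≠ 0) :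
    ∃ m : Fin 2 →₀ ℕ, m 0 + m 1 = psOrder f ∧ MvPowerSeries.coeff m f ≠ 0 := by
  have hne : {n | ∃ m : Fin 2 →₀ ℕ, m 0 + m 1 = n ∧ MvPowerSeries.coeff m f ≠ 0}.Nonempty := by
    have hex : ∃ m, MvPowerSeries.coeff m f ≠ 0 := by
      by_contra h
      push_neg at h
      exact hf (MvPowerSeries.ext h)
    obtain ⟨m, hm⟩ := hex
    exact ⟨m 0 + m 1, m, rfl, hm⟩
  exact Nat.sInf_mem hne

lemma psLowestForm_coeff (f : PS2) {m : Fin 2 →₀ ℕ} (hm : m 0 + m 1 = psOrder f) :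
    MvPolynomial.coeff m (psLowestForm f) = MvPowerSeries.coeff m f := by
  rw [psLowestForm, MvPolynomial.coeff_sum]
  rw [Finset.sum_eq_single (m 0)]
  · have h1 : psOrder f - m 0 = m 1 := by omega
    have h2 : (Finsupp.single 0 (m 0) + Finsupp.single 1 (psOrder f - m 0) : Fin 2 →₀ ℕ) = m := by
      rw [h1]; exact (fin2_eq m).symm
    rw [MvPolynomial.coeff_monomial, if_pos h2, h2]
  · intro i _ hi
    rw [MvPolynomial.coeff_monomial, if_neg]
    intro hcontra
    apply hi
    have := congrArg (fun (x : Fin 2 →₀ ℕ) => x 0) hcontra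
    simpa [fin2_apply_0] using this
  · intro h
    exact absurd (Finset.mem_range.mpr (by omega)) h

lemma psLowestForm_isHomogeneous (f : PS2) :
    (psLowestForm f).IsHomogeneous (psOrder f) := by
  apply MvPolynomial.IsHomogeneous.sum
  intro i hi
  apply MvPolynomial.isHomogeneous_monomial
  rw [degree_fin2, fin2_apply_0, fin2_apply_1]
  have := Finset.mem_range.mp hi
  omega

lemma wOrder_one (f : PS2) : wOrder (fun _ => 1) f = psOrder f := by
  unfold wOrder psOrder
  simp only [mul_one]

lemma wInitialForm_one (f : PS2) : wInitialForm (fun _ => 1) f = psLowestForm f := by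
  rw [wInitialForm, psLowestForm, wOrder_one]
  set d := psOrder f with hd
  refine Finset.sum_bij' (fun (p : ℕ × ℕ) _ => p.1) (fun i _ => (i, d - i)) ?_ ?_ ?_ ?_ ?_
  · intro p hp
    rw [Finset.mem_filter, Finset.mem_product] at hp
    exact hp.1.1
  · intro i hi
    have hi' := Finset.mem_range.mp hi
    rw [Finset.mem_filter, Finset.mem_product]
    dsimp only
    exact ⟨⟨hi, Finset.mem_range.mpr (by omega)⟩, by simp only [mul_one]; omega⟩
  · intro p hp
    rw [Finset.mem_filter, Finset.mem_product] at hp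
    have := hp.2
    simp only [mul_one] at this
    have h2 : p.2 = d - p.1 := by omega
    exact Prod.ext rfl h2.symm
  · intro i hi
    rfl
  · intro p hp
    rw [Finset.mem_filter, Finset.mem_product] at hp
    have := hp.2
    simp only [mul_one] at this
    have h2 : p.2 = d - p.1 := by omega
    rw [h2]

end NND

/-- The lowest-degree homogeneous form of a nonzero Newton-non-degenerate
power series `f` with `f(0) = 0` is `c · u^a · v^b · g` with `c ≠ 0` and `g` a squarefree
homogeneous polynomial divisible by neither `u` nor `v`; in particular at most the two tangent
lines `u = 0`, `v = 0` occur in the tangent cone of `{f = 0}` with multiplicity `> 1`. -/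
theorem newton_nondegenerate_tangent_cone
    (f : PS2) (hf : f ≠ 0)
    (h0 : MvPowerSeries.constantCoeff f = 0)
    (hN : NewtonNonDegenerate f) :
    ∃ (c : ℂ) (a b : ℕ) (g : Poly2), c ≠ 0 ∧
      psLowestForm f = c • (X 0 ^ a * X 1 ^ b * g) ∧
      g.IsHomogeneous (psOrder f - a - b) ∧
      Squarefree g ∧
      ¬ (X 0 : Poly2) ∣ g ∧ ¬ (X 1 : Poly2) ∣ g := by
  classical
  set d := psOrder f with hd
  set P := psLowestForm f with hPdef
  have hPhom : P.IsHomogeneous d := NND.psLowestForm_isHomogeneous f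
  obtain ⟨m₀, hm₀d, hm₀⟩ := NND.psOrder_spec f hf
  have hPne : P ≠ 0 := fun h =>
    hm₀ (by rw [← NND.psLowestForm_coeff f hm₀d, ← hPdef, h, MvPolynomial.coeff_zero])
  set p := NND.phi P with hp
  have hp0 : p ≠ 0 := fun h =>
    hPne (NND.phi_inj hPhom (isHomogeneous_zero _ _ d) (by rw [← hp, h, map_zero]))
  -- no nonzero double root of p
  have hnd : ∀ l : ℂ, l ≠ 0 → ¬ ((Polynomial.X - Polynomial.C l) ^ 2 ∣ p) := by
    intro l hl hdvd
    apply hN (fun _ => 1) (fun _ => one_pos)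
    refine ⟨![1, l], by norm_num, hl, ?_, ?_⟩
    · rw [NND.wInitialForm_one]
      exact NND.crit hPhom l hdvd 0
    · rw [NND.wInitialForm_one]
      exact NND.crit hPhom l hdvd 1
  set b := p.rootMultiplicity 0 with hb
  have hXb : (Polynomial.X : Polynomial ℂ) ^ b ∣ p := by
    simpa using p.pow_rootMultiplicity_dvd 0
  obtain ⟨q, hq⟩ := hXb
  have hq0 : q ≠ 0 := fun h => hp0 (by rw [hq, h, mul_zero])
  have hqX : ¬ ((Polynomial.X : Polynomial ℂ) ∣ q) := by
    rintro ⟨r, hr⟩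
    have hdd : (Polynomial.X : Polynomial ℂ) ^ (b + 1) ∣ p := ⟨r, by rw [hq, hr]; ring⟩
    exact Polynomial.pow_rootMultiplicity_not_dvd hp0 0
      (by rw [map_zero, sub_zero]; exact hdd)
  have hq00 : q.eval 0 ≠ 0 := by
    intro h
    apply hqX
    have hdv : (Polynomial.X - Polynomial.C (0:ℂ)) ∣ q := Polynomial.dvd_iff_isRoot.mpr h
    simpa using hdv
  set e := q.natDegree with he
  have hple : p.natDegree ≤ d := NND.natDegree_phi_le hPhom
  have hpdeg : p.natDegree = b + e := by
    rw [hq, Polynomial.natDegree_mul (pow_ne_zero _ Polynomial.X_ne_zero) hq0,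
      Polynomial.natDegree_pow, Polynomial.natDegree_X, mul_one]
  have hbe : b + e ≤ d := by omega
  set a := d - (b + e) with ha
  set g := NND.hom e q with hg
  have hgphi : NND.phi g = q := NND.phi_hom e q le_rfl
  have hgne : g ≠ 0 := fun h => hq0 (by rw [← hgphi, h, map_zero])
  -- the key decomposition
  have hdecomp : P = X 0 ^ a * X 1 ^ b * g := by
    calc P = NND.hom d p := (NND.hom_phi hPhom).symm
      _ = NND.hom (a + (b + e)) ((1 : Polynomial ℂ) * (Polynomial.X ^ b * q)) := by
          rw [one_mul, ← hq]
          congr 1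
          omega
      _ = NND.hom a 1 * NND.hom (b + e) (Polynomial.X ^ b * q) := by
          refine NND.hom_mul (by simp) ?_
          refine le_trans Polynomial.natDegree_mul_le ?_
          simp [Polynomial.natDegree_pow]
          omega
      _ = NND.hom a 1 * (NND.hom b (Polynomial.X ^ b) * NND.hom e q) := by
          rw [NND.hom_mul (by simp [Polynomial.natDegree_pow]) le_rfl]
      _ = X 0 ^ a * X 1 ^ b * g := by
          rw [NND.hom_one, NND.hom_X_pow, ← hg, mul_assoc]
  -- not divisible by X 0 or X 1
  have hXu : ¬ (X 0 : Poly2) ∣ g := by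
    rintro ⟨h, hh⟩
    have hev : MvPolynomial.eval ![(0:ℂ), 1] g = 0 := by
      rw [hh, map_mul]
      simp
    rw [hg, NND.eval01_hom] at hev
    exact (Polynomial.leadingCoeff_ne_zero.mpr hq0) hev
  have hXv : ¬ (X 1 : Poly2) ∣ g := by
    rintro ⟨h, hh⟩
    have hev : MvPolynomial.eval ![(1:ℂ), 0] g = 0 := by
      rw [hh, map_mul]
      simp
    rw [hg, NND.eval10_hom, Polynomial.coeff_zero_eq_eval_zero] at hev
    exact hq00 hev
  refine ⟨1, a, b, g, one_ne_zero, by rw [one_smul]; exact hdecomp, ?_, ?_, hXu, hXv⟩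
  · have h1 : psOrder f - a - b = e := by omega
    rw [h1, hg]
    exact NND.hom_isHomogeneous e q
  · -- squarefree
    intro s hs
    by_contra hsu
    have hsg : s ∣ g := (dvd_mul_right s s).trans hs
    obtain ⟨k, hk⟩ := NND.isHomogeneous_of_dvd (hg ▸ NND.hom_isHomogeneous e q) hgne hsg
    have hs0 : s ≠ 0 := by
      rintro rfl
      obtain ⟨t, ht⟩ := hsg
      rw [ht, zero_mul] at hgne
      exact hgne rfl
    set ps := NND.phi s with hps
    have hps0 : ps ≠ 0 := fun h =>
      hs0 (NND.phi_inj hk (isHomogeneous_zero _ _ k) (by rw [← hps, h, map_zero]))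
    rcases Nat.eq_zero_or_pos ps.natDegree with hd0 | hdpos
    · -- ps constant, so s = c · X0^k; since s is not a unit, k ≥ 1, contradicting hXu
      obtain ⟨c, hc⟩ := Polynomial.natDegree_eq_zero.mp hd0
      have hc0 : c ≠ 0 := by
        rintro rfl
        rw [map_zero] at hc
        exact hps0 hc.symm
      have hsX : s = MvPolynomial.monomial (Finsupp.single 0 k) c := by
        rw [← NND.hom_phi hk, ← hps, ← hc, NND.hom_C]
      rcases Nat.eq_zero_or_pos k with hk0 | hkpos
      · apply hsu
        rw [hsX, hk0, Finsupp.single_zero, MvPolynomial.monomial_zero']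
        exact (isUnit_iff_ne_zero.mpr hc0).map (MvPolynomial.C : ℂ →+* Poly2)
      · apply hXu
        have hrw : (MvPolynomial.monomial (Finsupp.single 0 k) c : Poly2)
            = MvPolynomial.C c * X 0 ^ k := by
          rw [MvPolynomial.X_pow_eq_monomial, MvPolynomial.C_mul_monomial, mul_one]
        have hdvd0 : (X 0 : Poly2) ∣ s := by
          rw [hsX, hrw]
          exact (dvd_pow_self (X 0 : Poly2) (Nat.pos_iff_ne_zero.mp hkpos)).mul_left _
        exact hdvd0.trans hsg
    · obtain ⟨l, hl⟩ := Complex.exists_root (Polynomial.natDegree_pos_iff_degree_pos.mp hdpos)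
      have hXl : (Polynomial.X - Polynomial.C l) ∣ ps := Polynomial.dvd_iff_isRoot.mpr hl
      have h2 : (Polynomial.X - Polynomial.C l) ^ 2 ∣ q := by
        rw [← hgphi]
        obtain ⟨t, ht⟩ := hs
        rw [ht, map_mul, map_mul]
        exact dvd_mul_of_dvd_left (by rw [sq]; exact mul_dvd_mul hXl hXl) _
      have hlne : l ≠ 0 := by
        rintro rfl
        apply hq00
        have hdq : (Polynomial.X - Polynomial.C 0) ∣ q :=
          dvd_trans (dvd_pow_self _ two_ne_zero) h2
        have := Polynomial.dvd_iff_isRoot.mp hdq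
        simpa using this
      have h2p : (Polynomial.X - Polynomial.C l) ^ 2 ∣ p :=
        h2.trans ⟨Polynomial.X ^ b, by rw [hq]; ring⟩
      exact hnd l hlne h2p

end
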